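/- Let ψ, φ : ℝ³ → ℝ be smooth functions and define on smooth functions the bracket {f,g}(x) = ψ(x) · ⟨∇φ(x), ∇f(x) × ∇g(x)⟩. Then this bracket satisfies the Jacobi identity: {{f,g},h} + {{g,h},f} + {{h,f},g} = 0 for all smooth f,g,h : ℝ³ → ℝ. Thus every Poisson vector of the form P = ψ∇φ defines a Poisson structure on ℝ³. -/

import Mathlib

open scoped ContDiff

noncomputable section

/-- Partial derivative in the `i`-th coordinate direction. -/
def pd (i : Fin 3) (f : (Fin 3 → ℝ) → ℝ) : (Fin 3 → ℝ) → ℝ :=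
  fun x => fderiv ℝ f x (Pi.single i 1)

/-- Gradient of a function on ℝ³. -/
def grad (f : (Fin 3 → ℝ) → ℝ) (x : Fin 3 → ℝ) : Fin 3 → ℝ :=
  fun i => pd i f x

/-- Cross product on ℝ³. -/
def cross (u v : Fin 3 → ℝ) : Fin 3 → ℝ :=
  ![u 1 * v 2 - u 2 * v 1, u 2 * v 0 - u 0 * v 2, u 0 * v 1 - u 1 * v 0]

/-- Euclidean inner product on ℝ³. -/
def dot (u v : Fin 3 → ℝ) : ℝ := ∑ i, u i * v i

/-- The bracket {f,g}(x) = ψ(x)·⟨∇φ(x), ∇f(x) × ∇g(x)⟩ of the Poisson vector ψ∇φ. -/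
def pb (ψ φ f g : (Fin 3 → ℝ) → ℝ) : (Fin 3 → ℝ) → ℝ :=
  fun x => ψ x * dot (grad φ x) (cross (grad f x) (grad g x))

lemma pd_smooth {f : (Fin 3 → ℝ) → ℝ} (hf : ContDiff ℝ ∞ f) (i : Fin 3) :
    ContDiff ℝ ∞ (pd i f) :=
  (hf.fderiv_right (by simp)).clm_apply contDiff_const

lemma pd_diff {f : (Fin 3 → ℝ) → ℝ} (hf : ContDiff ℝ ∞ f) (i : Fin 3) :
    Differentiable ℝ (pd i f) :=
  (pd_smooth hf i).differentiable (by simp)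

lemma pd_mul (i : Fin 3) {a b : (Fin 3 → ℝ) → ℝ} {x : Fin 3 → ℝ}
    (ha : DifferentiableAt ℝ a x) (hb : DifferentiableAt ℝ b x) :
    pd i (fun y => a y * b y) x = pd i a x * b x + a x * pd i b x := by
  simp only [pd, fderiv_fun_mul ha hb, ContinuousLinearMap.add_apply,
    ContinuousLinearMap.smul_apply, smul_eq_mul]
  ring

lemma pd_sub (i : Fin 3) {a b : (Fin 3 → ℝ) → ℝ} {x : Fin 3 → ℝ}
    (ha : DifferentiableAt ℝ a x) (hb : DifferentiableAt ℝ b x) :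
    pd i (fun y => a y - b y) x = pd i a x - pd i b x := by
  simp [pd, fderiv_fun_sub ha hb]

lemma pd_add (i : Fin 3) {a b : (Fin 3 → ℝ) → ℝ} {x : Fin 3 → ℝ}
    (ha : DifferentiableAt ℝ a x) (hb : DifferentiableAt ℝ b x) :
    pd i (fun y => a y + b y) x = pd i a x + pd i b x := by
  simp [pd, fderiv_fun_add ha hb]

lemma pd_pd_symm {f : (Fin 3 → ℝ) → ℝ} (hf : ContDiff ℝ ∞ f) (i j : Fin 3) (x : Fin 3 → ℝ) :
    pd i (pd j f) x = pd j (pd i f) x := by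
  have hs : IsSymmSndFDerivAt ℝ f x :=
    (hf.contDiffAt).isSymmSndFDerivAt (by simp [minSmoothness_of_isRCLikeNormedField]; exact WithTop.coe_le_coe.mpr (le_top : (2 : ℕ∞) ≤ ⊤))
  have key : ∀ k l : Fin 3, pd k (pd l f) x
      = fderiv ℝ (fderiv ℝ f) x (Pi.single k 1) (Pi.single l 1) := by
    intro k l
    have hd : DifferentiableAt ℝ (fderiv ℝ f) x :=
      ((hf.fderiv_right (m := ∞) (by simp)).differentiable
        (by simp)).differentiableAt
    have e : pd l f = fun y => fderiv ℝ f y (Pi.single l 1) := rfl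
    simp only [pd, e]
    rw [fderiv_clm_apply hd (differentiableAt_const _)]
    simp
  rw [key, key, hs]

lemma pb_eval (ψ φ f g : (Fin 3 → ℝ) → ℝ) (x : Fin 3 → ℝ) :
    pb ψ φ f g x =
      ψ x * pd 0 φ x * pd 1 f x * pd 2 g x - ψ x * pd 0 φ x * pd 2 f x * pd 1 g x
      + ψ x * pd 1 φ x * pd 2 f x * pd 0 g x - ψ x * pd 1 φ x * pd 0 f x * pd 2 g x
      + ψ x * pd 2 φ x * pd 0 f x * pd 1 g x - ψ x * pd 2 φ x * pd 1 f x * pd 0 g x := by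
  simp [pb, dot, cross, grad, Fin.sum_univ_three]
  ring
lemma pd_quad (i a b c : Fin 3) (ψ φ f g : (Fin 3 → ℝ) → ℝ)
    (hψ : ContDiff ℝ ∞ ψ) (hφ : ContDiff ℝ ∞ φ)
    (hf : ContDiff ℝ ∞ f) (hg : ContDiff ℝ ∞ g) (x : Fin 3 → ℝ) :
    pd i (fun y => ψ y * pd a φ y * pd b f y * pd c g y) x =
      pd i ψ x * pd a φ x * pd b f x * pd c g x
      + ψ x * pd i (pd a φ) x * pd b f x * pd c g x
      + ψ x * pd a φ x * pd i (pd b f) x * pd c g x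
      + ψ x * pd a φ x * pd b f x * pd i (pd c g) x := by
  have dψ : Differentiable ℝ ψ := hψ.differentiable (by simp)
  have d1 : Differentiable ℝ (fun y => ψ y * pd a φ y) := dψ.mul (pd_diff hφ a)
  have d2 : Differentiable ℝ (fun y => ψ y * pd a φ y * pd b f y) := d1.mul (pd_diff hf b)
  rw [pd_mul i d2.differentiableAt (pd_diff hg c).differentiableAt,
      pd_mul i d1.differentiableAt (pd_diff hf b).differentiableAt,
      pd_mul i dψ.differentiableAt (pd_diff hφ a).differentiableAt]
  ring

lemma pd_pb_eval (ψ φ f g : (Fin 3 → ℝ) → ℝ)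
    (hψ : ContDiff ℝ ∞ ψ) (hφ : ContDiff ℝ ∞ φ)
    (hf : ContDiff ℝ ∞ f) (hg : ContDiff ℝ ∞ g) (i : Fin 3) (x : Fin 3 → ℝ) :
    pd i (pb ψ φ f g) x =
      (pd i ψ x * pd 0 φ x * pd 1 f x * pd 2 g x
      + ψ x * pd i (pd 0 φ) x * pd 1 f x * pd 2 g x
      + ψ x * pd 0 φ x * pd i (pd 1 f) x * pd 2 g x
      + ψ x * pd 0 φ x * pd 1 f x * pd i (pd 2 g) x)
      - (pd i ψ x * pd 0 φ x * pd 2 f x * pd 1 g x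
      + ψ x * pd i (pd 0 φ) x * pd 2 f x * pd 1 g x
      + ψ x * pd 0 φ x * pd i (pd 2 f) x * pd 1 g x
      + ψ x * pd 0 φ x * pd 2 f x * pd i (pd 1 g) x)
      + (pd i ψ x * pd 1 φ x * pd 2 f x * pd 0 g x
      + ψ x * pd i (pd 1 φ) x * pd 2 f x * pd 0 g x
      + ψ x * pd 1 φ x * pd i (pd 2 f) x * pd 0 g x
      + ψ x * pd 1 φ x * pd 2 f x * pd i (pd 0 g) x)
      - (pd i ψ x * pd 1 φ x * pd 0 f x * pd 2 g x
      + ψ x * pd i (pd 1 φ) x * pd 0 f x * pd 2 g x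
      + ψ x * pd 1 φ x * pd i (pd 0 f) x * pd 2 g x
      + ψ x * pd 1 φ x * pd 0 f x * pd i (pd 2 g) x)
      + (pd i ψ x * pd 2 φ x * pd 0 f x * pd 1 g x
      + ψ x * pd i (pd 2 φ) x * pd 0 f x * pd 1 g x
      + ψ x * pd 2 φ x * pd i (pd 0 f) x * pd 1 g x
      + ψ x * pd 2 φ x * pd 0 f x * pd i (pd 1 g) x)
      - (pd i ψ x * pd 2 φ x * pd 1 f x * pd 0 g x
      + ψ x * pd i (pd 2 φ) x * pd 1 f x * pd 0 g x
      + ψ x * pd 2 φ x * pd i (pd 1 f) x * pd 0 g x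
      + ψ x * pd 2 φ x * pd 1 f x * pd i (pd 0 g) x) := by
  have dψ : Differentiable ℝ ψ := hψ.differentiable (by simp)
  have dq : ∀ a b c : Fin 3,
      Differentiable ℝ (fun y => ψ y * pd a φ y * pd b f y * pd c g y) :=
    fun a b c => ((dψ.mul (pd_diff hφ a)).mul (pd_diff hf b)).mul (pd_diff hg c)
  have hpb : pb ψ φ f g = fun y =>
      ψ y * pd 0 φ y * pd 1 f y * pd 2 g y - ψ y * pd 0 φ y * pd 2 f y * pd 1 g y
      + ψ y * pd 1 φ y * pd 2 f y * pd 0 g y - ψ y * pd 1 φ y * pd 0 f y * pd 2 g y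
      + ψ y * pd 2 φ y * pd 0 f y * pd 1 g y - ψ y * pd 2 φ y * pd 1 f y * pd 0 g y :=
    funext fun y => pb_eval ψ φ f g y
  rw [hpb,
    pd_sub i (((((dq 0 1 2).fun_sub (dq 0 2 1)).fun_add (dq 1 2 0)).fun_sub (dq 1 0 2)).fun_add
      (dq 2 0 1)).differentiableAt (dq 2 1 0).differentiableAt,
    pd_add i ((((dq 0 1 2).fun_sub (dq 0 2 1)).fun_add (dq 1 2 0)).fun_sub
      (dq 1 0 2)).differentiableAt (dq 2 0 1).differentiableAt,
    pd_sub i (((dq 0 1 2).fun_sub (dq 0 2 1)).fun_add (dq 1 2 0)).differentiableAt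
      (dq 1 0 2).differentiableAt,
    pd_add i ((dq 0 1 2).fun_sub (dq 0 2 1)).differentiableAt (dq 1 2 0).differentiableAt,
    pd_sub i (dq 0 1 2).differentiableAt (dq 0 2 1).differentiableAt,
    pd_quad i 0 1 2 ψ φ f g hψ hφ hf hg x,
    pd_quad i 0 2 1 ψ φ f g hψ hφ hf hg x,
    pd_quad i 1 2 0 ψ φ f g hψ hφ hf hg x,
    pd_quad i 1 0 2 ψ φ f g hψ hφ hf hg x,
    pd_quad i 2 0 1 ψ φ f g hψ hφ hf hg x,
    pd_quad i 2 1 0 ψ φ f g hψ hφ hf hg x]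


/-- **P = ψ∇φ defines a Poisson structure on ℝ³.**  For smooth ψ, φ the bracket
{f,g} = ψ·⟨∇φ, ∇f × ∇g⟩ satisfies the Jacobi identity for all smooth f, g, h. -/
theorem jacobi_of_psi_grad_phi
    (ψ φ : (Fin 3 → ℝ) → ℝ) (hψ : ContDiff ℝ ∞ ψ) (hφ : ContDiff ℝ ∞ φ) :
    ∀ f g h : (Fin 3 → ℝ) → ℝ, ContDiff ℝ ∞ f → ContDiff ℝ ∞ g → ContDiff ℝ ∞ h →
      ∀ x, pb ψ φ (pb ψ φ f g) h x + pb ψ φ (pb ψ φ g h) f x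
            + pb ψ φ (pb ψ φ h f) g x = 0 := by
  intro f g h hf hg hh x
  rw [pb_eval ψ φ (pb ψ φ f g) h x, pb_eval ψ φ (pb ψ φ g h) f x,
      pb_eval ψ φ (pb ψ φ h f) g x]
  simp only [pd_pb_eval ψ φ f g hψ hφ hf hg, pd_pb_eval ψ φ g h hψ hφ hg hh,
    pd_pb_eval ψ φ h f hψ hφ hh hf]
  simp only [pd_pd_symm hφ 1 0, pd_pd_symm hφ 2 0, pd_pd_symm hφ 2 1,
    pd_pd_symm hf 1 0, pd_pd_symm hf 2 0, pd_pd_symm hf 2 1,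
    pd_pd_symm hg 1 0, pd_pd_symm hg 2 0, pd_pd_symm hg 2 1,
    pd_pd_symm hh 1 0, pd_pd_symm hh 2 0, pd_pd_symm hh 2 1]
  ring

end
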